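/- arXiv:2305.15594 — 3 statements merged into one kernel-verified Lean document; each statement's English description precedes it below -/
import Mathlib

section
/- Adaptive composition of Rényi differential privacy: Fix α > 1 and an adjacency relation on datasets. Let M₁ be a mechanism with output space Ω₁ satisfying (α, ε₁)-Rényi differential privacy, and let M₂ be a Markov kernel assigning to each pair (D, o₁) of a dataset and an outcome o₁ ∈ Ω₁ a probability measure M₂(D, o₁) on Ω₂, such that for every fixed o₁ ∈ Ω₁ the mechanism D ↦ M₂(D, o₁) satisfies (α, ε₂)-Rényi differential privacy. Then the composed mechanism M(D) = the joint law of (o₁, o₂) with o₁ ∼ M₁(D) and o₂ ∼ M₂(D, o₁) satisfies (α, ε₁ + ε₂)-Rényi differential privacy. -/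
open MeasureTheory ProbabilityTheory
open scoped NNReal ENNReal Classical

/-- Clipping operator: `clip_c(v) = v / max(1, ‖v‖₂/c)`. -/
noncomputable def clip {d : ℕ} (c : ℝ) (v : EuclideanSpace ℝ (Fin d)) :
    EuclideanSpace ℝ (Fin d) :=
  (max 1 (‖v‖ / c))⁻¹ • v

/-- Add–remove adjacency: one dataset is obtained from the other by inserting one record. -/
def AddRemoveAdjacent {X : Type*} (D D' : List X) : Prop :=
  (∃ x l r, D = l ++ r ∧ D' = l ++ x :: r) ∨ (∃ x l r, D' = l ++ r ∧ D = l ++ x :: r)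

/-- `(ε, δ)`-differential privacy of a mechanism `M` w.r.t. an adjacency relation. -/
def DP {X Ω : Type*} [MeasurableSpace Ω] (M : List X → Measure Ω)
    (adj : List X → List X → Prop) (ε δ : ℝ) : Prop :=
  ∀ D D', adj D D' → ∀ S : Set Ω, MeasurableSet S →
    M D S ≤ ENNReal.ofReal (Real.exp ε) * M D' S + ENNReal.ofReal δ

/-- The isotropic Gaussian `N(μ, v I_d)` on `ℝ^d` (coordinates independent, each of variance `v`). -/
noncomputable def gaussianPi {d : ℕ} (μ : EuclideanSpace ℝ (Fin d)) (v : ℝ≥0) :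
    Measure (EuclideanSpace ℝ (Fin d)) :=
  (Measure.pi fun i : Fin d => gaussianReal (μ i) v).map
    (MeasurableEquiv.toLp 2 (Fin d → ℝ))

/-- Rényi divergence of order `α`. -/
noncomputable def renyiDiv {Ω : Type*} [MeasurableSpace Ω] (α : ℝ) (P Q : Measure Ω) : EReal :=
  if P ≪ Q then (((α - 1)⁻¹ : ℝ) : EReal) * ENNReal.log (∫⁻ x, P.rnDeriv Q x ^ α ∂Q)
  else ⊤

lemma renyiDiv_le_imp {Ω : Type*} [MeasurableSpace Ω] {α ε : ℝ} (hα : 1 < α)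
    {P Q : Measure Ω} (h : renyiDiv α P Q ≤ (ε : EReal)) :
    P ≪ Q ∧ ∫⁻ x, P.rnDeriv Q x ^ α ∂Q ≤ ENNReal.ofReal (Real.exp ((α - 1) * ε)) := by
  have hα1 : (0:ℝ) < α - 1 := by linarith
  have hac : P ≪ Q := by
    by_contra hc
    rw [renyiDiv, if_neg hc] at h
    exact (EReal.coe_lt_top ε).not_ge h
  refine ⟨hac, ?_⟩
  rw [renyiDiv, if_pos hac] at h
  set L := ∫⁻ x, P.rnDeriv Q x ^ α ∂Q with hL
  rcases eq_or_ne L 0 with h0 | h0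
  · simp [h0]
  rcases eq_or_ne L ⊤ with ht | ht
  · rw [ht, ENNReal.log_top, EReal.coe_mul_top_of_pos (by positivity)] at h
    exact absurd h (EReal.coe_lt_top ε).not_ge
  · have hlog : ENNReal.log L = ((Real.log L.toReal : ℝ) : EReal) :=
      ENNReal.log_pos_real' (ENNReal.toReal_pos h0 ht)
    rw [hlog, ← EReal.coe_mul, EReal.coe_le_coe_iff] at h
    have hLr : Real.log L.toReal ≤ (α - 1) * ε := by
      have hmul := mul_le_mul_of_nonneg_left h (le_of_lt hα1)
      calc Real.log L.toReal = (α - 1) * ((α - 1)⁻¹ * Real.log L.toReal) := by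
            field_simp
        _ ≤ (α - 1) * ε := hmul
    have hLt : L.toReal ≤ Real.exp ((α - 1) * ε) :=
      (Real.log_le_iff_le_exp (ENNReal.toReal_pos h0 ht)).mp hLr
    rw [← ENNReal.ofReal_toReal ht]
    exact ENNReal.ofReal_le_ofReal hLt

lemma renyi_key_bound {Ω₁ Ω₂ : Type*} [MeasurableSpace Ω₁] [MeasurableSpace Ω₂]
    {α : ℝ} (hα : 1 < α) (μ ν : Measure Ω₁) (κ η : Kernel Ω₁ Ω₂)
    [IsProbabilityMeasure μ] [IsProbabilityMeasure ν] [IsMarkovKernel κ] [IsMarkovKernel η]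
    (hac : μ ≪ ν) (hacK : ∀ x, κ x ≪ η x) (C₁ C₂ : ℝ≥0∞)
    (hC₁ : ∫⁻ x, μ.rnDeriv ν x ^ α ∂ν ≤ C₁)
    (hC₂ : ∀ x, ∫⁻ y, (κ x).rnDeriv (η x) y ^ α ∂(η x) ≤ C₂) :
    ∫⁻ p, (μ.compProd κ).rnDeriv (ν.compProd η) p ^ α ∂(ν.compProd η) ≤ C₁ * C₂ := by
  have hα0 : (0:ℝ) < α := by linarith
  have hα1 : (0:ℝ) < α - 1 := by linarith
  set h : Ω₁ × Ω₂ → ℝ≥0∞ := (μ.compProd κ).rnDeriv (ν.compProd η) with hh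
  have hmeas : Measurable h := Measure.measurable_rnDeriv _ _
  have hacc : μ.compProd κ ≪ ν.compProd η :=
    Measure.AbsolutelyContinuous.compProd hac (Filter.Eventually.of_forall hacK)
  have hwd : (ν.compProd η).withDensity h = μ.compProd κ :=
    Measure.withDensity_rnDeriv_eq _ _ hacc
  have hpq : α.HolderConjugate (α / (α - 1)) :=
    (Real.holderConjugate_iff_eq_conjExponent hα).mpr rfl
  have e2 : (1 : ℝ) / (α / (α - 1)) = (α - 1) / α := one_div_div _ _
  -- the truncated bound
  have main : ∀ n : ℕ, ∫⁻ p, min (h p) n ^ α ∂(ν.compProd η) ≤ C₁ * C₂ := by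
    intro n
    set g : Ω₁ × Ω₂ → ℝ≥0∞ := fun p => min (h p) n with hg_def
    have hg : Measurable g := hmeas.min measurable_const
    set T := ∫⁻ p, g p ^ α ∂(ν.compProd η) with hT
    have hTtop : T ≠ ⊤ := by
      have hle : T ≤ (n : ℝ≥0∞) ^ α * 1 := by
        rw [hT]
        calc ∫⁻ p, g p ^ α ∂(ν.compProd η) ≤ ∫⁻ _, (n : ℝ≥0∞) ^ α ∂(ν.compProd η) :=
              lintegral_mono fun p => ENNReal.rpow_le_rpow (min_le_right _ _) hα0.le
          _ = (n : ℝ≥0∞) ^ α * 1 := by simp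
      refine ne_top_of_le_ne_top ?_ hle
      simp [ENNReal.rpow_ne_top_of_nonneg hα0.le (ENNReal.natCast_ne_top n)]
    set f : Ω₁ → ℝ≥0∞ := μ.rnDeriv ν with hf_def
    have hfmeas : Measurable f := Measure.measurable_rnDeriv _ _
    have hfwd : ν.withDensity f = μ := Measure.withDensity_rnDeriv_eq _ _ hac
    set A : Ω₁ → ℝ≥0∞ := fun x => ∫⁻ y, g (x, y) ^ α ∂η x with hA_def
    have hAmeas : Measurable A := Measurable.lintegral_kernel_prod_right' (hg.pow_const α)
    have hTA : T = ∫⁻ x, A x ∂ν := by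
      rw [hT, Measure.lintegral_compProd (hg.pow_const α)]
    have hzsplit : ∀ z : ℝ≥0∞, z ^ α = z ^ (α - 1) * z := by
      intro z
      have hz := ENNReal.rpow_add_of_nonneg (x := z) (α - 1) 1 hα1.le zero_le_one
      rw [sub_add_cancel, ENNReal.rpow_one] at hz
      exact hz
    -- Step 1: T ≤ ∫ g^(α-1) d(μ ⊗ₘ κ)
    have step1 : T ≤ ∫⁻ p, g p ^ (α - 1) ∂(μ.compProd κ) := by
      rw [← hwd, lintegral_withDensity_eq_lintegral_mul _ hmeas (hg.pow_const (α - 1)), hT]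
      refine lintegral_mono fun p => ?_
      rw [hzsplit (g p)]
      calc g p ^ (α - 1) * g p ≤ g p ^ (α - 1) * h p :=
            mul_le_mul_right (min_le_left _ _) _
        _ = (h * fun p => g p ^ (α - 1)) p := mul_comm _ _
    -- Step 2: disintegrate
    have step2 : ∫⁻ p, g p ^ (α - 1) ∂(μ.compProd κ)
        = ∫⁻ x, f x * ∫⁻ y, g (x, y) ^ (α - 1) ∂κ x ∂ν := by
      rw [Measure.lintegral_compProd (hg.pow_const (α - 1)), ← hfwd,
        lintegral_withDensity_eq_lintegral_mul _ hfmeas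
          (Measurable.lintegral_kernel_prod_right' (hg.pow_const (α - 1)))]
      rfl
    -- Step 3: fiberwise Hölder
    have step3 : ∀ x, ∫⁻ y, g (x, y) ^ (α - 1) ∂κ x ≤ C₂ ^ ((1:ℝ) / α) * A x ^ ((α - 1) / α) := by
      intro x
      set k : Ω₂ → ℝ≥0∞ := (κ x).rnDeriv (η x) with hk_def
      have hkmeas : Measurable k := Measure.measurable_rnDeriv _ _
      have hkwd : (η x).withDensity k = κ x := Measure.withDensity_rnDeriv_eq _ _ (hacK x)
      have hgx : Measurable fun y => g (x, y) ^ (α - 1) :=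
        (hg.comp measurable_prodMk_left).pow_const _
      have heq : ∫⁻ y, g (x, y) ^ (α - 1) ∂κ x
          = ∫⁻ y, (k * fun y => g (x, y) ^ (α - 1)) y ∂η x := by
        rw [← hkwd, lintegral_withDensity_eq_lintegral_mul _ hkmeas hgx]
      rw [heq]
      have hH := ENNReal.lintegral_mul_le_Lp_mul_Lq (η x) hpq
        hkmeas.aemeasurable hgx.aemeasurable
      refine hH.trans ?_
      have e1 : ∀ y : Ω₂, (g (x, y) ^ (α - 1)) ^ (α / (α - 1)) = g (x, y) ^ α := by
        intro y
        rw [← ENNReal.rpow_mul]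
        congr 1
        field_simp
      simp_rw [e1, e2] at *
      exact mul_le_mul' (ENNReal.rpow_le_rpow (hC₂ x) (by positivity)) le_rfl
    -- Step 4: outer Hölder
    have step4 : T ≤ C₂ ^ ((1:ℝ) / α) * (C₁ ^ ((1:ℝ) / α) * T ^ ((α - 1) / α)) := by
      calc T ≤ ∫⁻ x, f x * ∫⁻ y, g (x, y) ^ (α - 1) ∂κ x ∂ν := step1.trans step2.le
        _ ≤ ∫⁻ x, C₂ ^ ((1:ℝ) / α) * (f x * A x ^ ((α - 1) / α)) ∂ν := by
            refine lintegral_mono fun x => ?_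
            calc f x * ∫⁻ y, g (x, y) ^ (α - 1) ∂κ x
                ≤ f x * (C₂ ^ ((1:ℝ) / α) * A x ^ ((α - 1) / α)) :=
                  mul_le_mul_right (step3 x) _
              _ = C₂ ^ ((1:ℝ) / α) * (f x * A x ^ ((α - 1) / α)) := by ring
        _ = C₂ ^ ((1:ℝ) / α) * ∫⁻ x, f x * A x ^ ((α - 1) / α) ∂ν :=
            lintegral_const_mul _ (hfmeas.mul (hAmeas.pow_const _))
        _ ≤ C₂ ^ ((1:ℝ) / α) * (C₁ ^ ((1:ℝ) / α) * T ^ ((α - 1) / α)) := by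
            refine mul_le_mul_right ?_ _
            have hH := ENNReal.lintegral_mul_le_Lp_mul_Lq ν hpq
              hfmeas.aemeasurable (hAmeas.pow_const ((α - 1) / α)).aemeasurable
            refine hH.trans ?_
            have e1 : ∀ x, (A x ^ ((α - 1) / α)) ^ (α / (α - 1)) = A x := by
              intro x
              rw [← ENNReal.rpow_mul]
              have hee : (α - 1) / α * (α / (α - 1)) = 1 := by field_simp
              rw [hee, ENNReal.rpow_one]
            simp_rw [e1, e2]
            exact mul_le_mul' (ENNReal.rpow_le_rpow hC₁ (by positivity))
              (by rw [← hTA])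
    -- Step 5: solve for T
    rcases eq_or_ne T 0 with hT0 | hT0
    · rw [hT0]; exact zero_le
    have hTsplit : T = T ^ ((1 : ℝ) / α) * T ^ ((α - 1) / α) := by
      rw [← ENNReal.rpow_add_of_nonneg _ _ (by positivity) (by positivity)]
      have he : (1 : ℝ) / α + (α - 1) / α = 1 := by field_simp; ring
      rw [he, ENNReal.rpow_one]
    have hpow_ne0 : T ^ ((α - 1) / α) ≠ 0 := fun hz => by
      rcases ENNReal.rpow_eq_zero_iff.mp hz with ⟨h0, _⟩ | ⟨ht, _⟩
      exacts [hT0 h0, hTtop ht]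
    have hpow_net : T ^ ((α - 1) / α) ≠ ⊤ :=
      ENNReal.rpow_ne_top_of_nonneg (by positivity) hTtop
    have hkey : T ^ ((1 : ℝ) / α) ≤ C₂ ^ ((1:ℝ) / α) * C₁ ^ ((1:ℝ) / α) := by
      rw [← ENNReal.mul_le_mul_iff_left hpow_ne0 hpow_net, ← hTsplit]
      calc T ≤ C₂ ^ ((1:ℝ) / α) * (C₁ ^ ((1:ℝ) / α) * T ^ ((α - 1) / α)) := step4
        _ = C₂ ^ ((1:ℝ) / α) * C₁ ^ ((1:ℝ) / α) * T ^ ((α - 1) / α) := by ring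
    calc T = (T ^ ((1 : ℝ) / α)) ^ α := by
          rw [← ENNReal.rpow_mul]
          have he : (1 : ℝ) / α * α = 1 := by field_simp
          rw [he, ENNReal.rpow_one]
      _ ≤ (C₂ ^ ((1:ℝ) / α) * C₁ ^ ((1:ℝ) / α)) ^ α := ENNReal.rpow_le_rpow hkey hα0.le
      _ = C₁ * C₂ := by
          rw [ENNReal.mul_rpow_of_nonneg _ _ hα0.le, ← ENNReal.rpow_mul, ← ENNReal.rpow_mul]
          have he : (1 : ℝ) / α * α = 1 := by field_simp
          rw [he, ENNReal.rpow_one, ENNReal.rpow_one, mul_comm]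
  -- limit step
  have hpt : ∀ x : ℝ≥0∞, x ^ α = ⨆ n : ℕ, min x n ^ α := by
    intro x
    refine le_antisymm ?_ (iSup_le fun n => ENNReal.rpow_le_rpow (min_le_left _ _) hα0.le)
    rcases eq_or_ne x ⊤ with hx | hx
    · subst hx
      have hmin : ∀ n : ℕ, min (⊤ : ℝ≥0∞) n = n := fun n => min_eq_right le_top
      simp_rw [hmin]
      rw [ENNReal.top_rpow_of_pos hα0]
      calc (⊤ : ℝ≥0∞) = ⨆ n : ℕ, (n : ℝ≥0∞) := ENNReal.iSup_natCast.symm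
        _ ≤ ⨆ n : ℕ, (n : ℝ≥0∞) ^ α := by
            refine iSup_mono fun n => ?_
            rcases Nat.eq_zero_or_pos n with h0 | h0
            · simp [h0]
            · have h1 : (1 : ℝ≥0∞) ≤ (n : ℝ≥0∞) := by exact_mod_cast h0
              calc (n : ℝ≥0∞) = (n : ℝ≥0∞) ^ (1 : ℝ) := (ENNReal.rpow_one _).symm
                _ ≤ (n : ℝ≥0∞) ^ α := ENNReal.rpow_le_rpow_of_exponent_le h1 hα.le
    · obtain ⟨n, hn⟩ := ENNReal.exists_nat_gt hx
      have hxm : min x n = x := min_eq_left hn.le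
      exact le_trans (le_of_eq (by rw [hxm])) (le_iSup (fun n : ℕ => min x n ^ α) n)
  calc ∫⁻ p, h p ^ α ∂(ν.compProd η) = ∫⁻ p, ⨆ n : ℕ, min (h p) n ^ α ∂(ν.compProd η) := by
        simp_rw [← hpt]
    _ = ⨆ n : ℕ, ∫⁻ p, min (h p) n ^ α ∂(ν.compProd η) := by
        refine lintegral_iSup (fun n => (hmeas.min measurable_const).pow_const α) ?_
        intro i j hij p
        exact ENNReal.rpow_le_rpow (min_le_min le_rfl (by exact_mod_cast hij)) hα0.le
    _ ≤ C₁ * C₂ := iSup_le main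

/-- **Adaptive composition of Rényi differential privacy.** If `M₁` is `(α, ε₁)`-RDP and,
for every fixed first outcome `o₁`, the mechanism `D ↦ M₂ D o₁` is `(α, ε₂)`-RDP, then the
composed mechanism `D ↦ joint law of (o₁, o₂)` with `o₁ ∼ M₁ D`, `o₂ ∼ M₂ D o₁` is
`(α, ε₁ + ε₂)`-RDP. -/
theorem renyiDP_adaptive_composition {X Ω₁ Ω₂ : Type*} [MeasurableSpace X]
    [MeasurableSpace Ω₁] [MeasurableSpace Ω₂]
    (adj : List X → List X → Prop) (α ε₁ ε₂ : ℝ) (hα : 1 < α)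
    (M₁ : List X → Measure Ω₁) (M₂ : List X → ProbabilityTheory.Kernel Ω₁ Ω₂)
    (hprob₁ : ∀ D, IsProbabilityMeasure (M₁ D))
    (hprob₂ : ∀ D, ProbabilityTheory.IsMarkovKernel (M₂ D))
    (h₁ : ∀ D D', adj D D' → renyiDiv α (M₁ D) (M₁ D') ≤ (ε₁ : EReal))
    (h₂ : ∀ (o₁ : Ω₁) D D', adj D D' → renyiDiv α (M₂ D o₁) (M₂ D' o₁) ≤ (ε₂ : EReal)) :
    ∀ D D', adj D D' →
      renyiDiv α ((M₁ D).compProd (M₂ D)) ((M₁ D').compProd (M₂ D'))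
        ≤ ((ε₁ + ε₂ : ℝ) : EReal) := by
  intro D D' hDD'
  have hα1 : (0:ℝ) < α - 1 := by linarith
  haveI := hprob₁ D; haveI := hprob₁ D'; haveI := hprob₂ D; haveI := hprob₂ D'
  obtain ⟨hac1, hb1⟩ := renyiDiv_le_imp hα (h₁ D D' hDD')
  have hac2 : ∀ o₁, M₂ D o₁ ≪ M₂ D' o₁ := fun o₁ => (renyiDiv_le_imp hα (h₂ o₁ D D' hDD')).1
  have hb2 : ∀ o₁, ∫⁻ y, ((M₂ D o₁).rnDeriv (M₂ D' o₁)) y ^ α ∂(M₂ D' o₁)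
      ≤ ENNReal.ofReal (Real.exp ((α - 1) * ε₂)) :=
    fun o₁ => (renyiDiv_le_imp hα (h₂ o₁ D D' hDD')).2
  have hacc : (M₁ D).compProd (M₂ D) ≪ (M₁ D').compProd (M₂ D') :=
    Measure.AbsolutelyContinuous.compProd hac1 (Filter.Eventually.of_forall hac2)
  have hT := renyi_key_bound hα (M₁ D) (M₁ D') (M₂ D) (M₂ D') hac1 hac2 _ _ hb1 hb2
  have hC : ENNReal.ofReal (Real.exp ((α - 1) * ε₁)) * ENNReal.ofReal (Real.exp ((α - 1) * ε₂))
      = ENNReal.ofReal (Real.exp ((α - 1) * (ε₁ + ε₂))) := by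
    rw [← ENNReal.ofReal_mul (Real.exp_nonneg _), ← Real.exp_add]
    ring_nf
  rw [hC] at hT
  rw [renyiDiv, if_pos hacc]
  set T := ∫⁻ p, ((M₁ D).compProd (M₂ D)).rnDeriv ((M₁ D').compProd (M₂ D')) p ^ α
      ∂((M₁ D').compProd (M₂ D')) with hTdef
  have hlog : ENNReal.log T ≤ (((α - 1) * (ε₁ + ε₂) : ℝ) : EReal) := by
    calc ENNReal.log T ≤ ENNReal.log (ENNReal.ofReal (Real.exp ((α - 1) * (ε₁ + ε₂)))) :=
          ENNReal.log_monotone hT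
      _ = (((α - 1) * (ε₁ + ε₂) : ℝ) : EReal) := by
          rw [ENNReal.log_ofReal_of_pos (Real.exp_pos _), Real.log_exp]
  rcases eq_or_ne T 0 with hT0 | hT0
  · rw [hT0, ENNReal.log_zero, EReal.coe_mul_bot_of_pos (by positivity)]
    exact bot_le
  have hTtop : T ≠ ⊤ := by
    intro htop
    rw [htop, ENNReal.log_top] at hlog
    exact absurd hlog (EReal.coe_lt_top _).not_ge
  have hlogreal : ENNReal.log T = ((Real.log T.toReal : ℝ) : EReal) :=
    ENNReal.log_pos_real' (ENNReal.toReal_pos hT0 hTtop)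
  rw [hlogreal] at hlog ⊢
  rw [← EReal.coe_mul, EReal.coe_le_coe_iff]
  rw [EReal.coe_le_coe_iff] at hlog
  have h1 := mul_le_mul_of_nonneg_left hlog (by positivity : (0:ℝ) ≤ (α - 1)⁻¹)
  calc (α - 1)⁻¹ * Real.log T.toReal ≤ (α - 1)⁻¹ * ((α - 1) * (ε₁ + ε₂)) := h1
    _ = ε₁ + ε₂ := by field_simp
end

section
/- Rényi privacy of the GNMax aggregator: Let K ∈ ℕ, σ > 0, and let n, n' ∈ ℝ^K be two vote histograms with ‖n − n'‖₂² ≤ 2. Let Z₁, …, Z_K be independent N(0, σ²) random variables, and let P (respectively P') be the law on {1, …, K} of argmax_j (n_j + Z_j) (respectively argmax_j (n'_j + Z_j)), with ties broken by taking the smallest maximizing index. Then for every α > 1, the Rényi divergence satisfies D_α(P ‖ P') ≤ α / σ². -/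
open MeasureTheory ProbabilityTheory
open scoped NNReal ENNReal Classical

/-- The argmax of `f : Fin K → ℝ`, with ties broken by taking the smallest maximizing index. -/
noncomputable def argmaxLeast {K : ℕ} [NeZero K] (f : Fin K → ℝ) : Fin K :=
  (Finset.univ.filter fun i => ∀ j, f j ≤ f i).min' (by
    obtain ⟨i, -, hi⟩ := Finset.exists_max_image Finset.univ f
      ⟨⟨0, Nat.pos_of_ne_zero (NeZero.ne K)⟩, Finset.mem_univ _⟩
    exact ⟨i, Finset.mem_filter.mpr ⟨Finset.mem_univ _, fun j => hi j (Finset.mem_univ j)⟩⟩)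


open Real

lemma lintegral_pi_prod {k : ℕ} (μ : Fin k → Measure ℝ) [∀ i, SigmaFinite (μ i)]
    (f : Fin k → ℝ → ℝ≥0∞) (hf : ∀ i, Measurable (f i)) :
    ∫⁻ x, ∏ i, f i (x i) ∂Measure.pi μ = ∏ i, ∫⁻ x, f i x ∂μ i := by
  induction k with
  | zero => simp [Measure.pi_of_empty, lintegral_dirac]
  | succ k ih =>
    have hF : Measurable fun x : Fin (k+1) → ℝ => ∏ i, f i (x i) :=
      Finset.measurable_prod _ fun i _ => (hf i).comp (measurable_pi_apply i)
    rw [← ((measurePreserving_piFinSuccAbove μ 0).symm _).lintegral_comp hF]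
    have : ∀ p : ℝ × (Fin k → ℝ),
        (∏ i, f i ((MeasurableEquiv.piFinSuccAbove (fun _ => ℝ) 0).symm p i))
          = f 0 p.1 * ∏ i : Fin k, f i.succ (p.2 i) := by
      intro p
      simp [MeasurableEquiv.piFinSuccAbove_symm_apply, Fin.prod_univ_succ, Fin.zero_succAbove]
    simp_rw [this]
    rw [lintegral_prod_mul (f := f 0) (g := fun y : Fin k → ℝ => ∏ i : Fin k, f i.succ (y i))
      (hf 0).aemeasurable
      (Finset.measurable_prod _ fun (i : Fin k) _ =>
        (hf i.succ).comp (measurable_pi_apply i)).aemeasurable]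
    simp_rw [Fin.zero_succAbove]
    rw [ih (fun i => μ i.succ) (fun i => f i.succ) (fun i => hf i.succ)]
    rw [Fin.prod_univ_succ]

lemma pi_withDensity {k : ℕ} (μ : Fin k → Measure ℝ) [∀ i, SigmaFinite (μ i)]
    (g : Fin k → ℝ → ℝ≥0∞) (hg : ∀ i, Measurable (g i))
    [∀ i, SigmaFinite ((μ i).withDensity (g i))] :
    Measure.pi (fun i => (μ i).withDensity (g i))
      = (Measure.pi μ).withDensity (fun x => ∏ i, g i (x i)) := by
  refine Measure.pi_eq (μ := fun i => (μ i).withDensity (g i)) fun s hs => ?_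
  rw [withDensity_apply _ (MeasurableSet.univ_pi hs),
    ← lintegral_indicator (MeasurableSet.univ_pi hs)]
  have : ∀ x : Fin k → ℝ, (Set.univ.pi s).indicator (fun x => ∏ i, g i (x i)) x
      = ∏ i, (s i).indicator (g i) (x i) := by
    intro x
    by_cases hx : x ∈ Set.univ.pi s
    · rw [Set.indicator_of_mem hx]
      exact Finset.prod_congr rfl fun i _ =>
        (Set.indicator_of_mem (hx i (Set.mem_univ i)) _).symm
    · rw [Set.indicator_of_notMem hx]
      rw [Set.mem_univ_pi] at hx
      push_neg at hx
      obtain ⟨i, hi⟩ := hx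
      exact (Finset.prod_eq_zero (Finset.mem_univ i) (Set.indicator_of_notMem hi _)).symm
  rw [lintegral_congr this,
    lintegral_pi_prod μ _ (fun i => (hg i).indicator (hs i))]
  exact Finset.prod_congr rfl fun i _ => by
    rw [lintegral_indicator (hs i), ← withDensity_apply _ (hs i)]

lemma lintegral_exp_gaussian (m : ℝ) {v : ℝ≥0} (hv : v ≠ 0) (t c : ℝ) :
    ∫⁻ x, ENNReal.ofReal (rexp (t * x + c)) ∂(gaussianReal m v) =
      ENNReal.ofReal (rexp (m * t + v * t ^ 2 / 2 + c)) := by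
  have hv' : (0:ℝ) < (v:ℝ) := by positivity
  have hg : Measurable fun x : ℝ => ENNReal.ofReal (rexp (t * x + c)) := by fun_prop
  have key : ∀ x : ℝ, gaussianPDFReal m v x * rexp (t * x + c)
      = rexp (m * t + v * t ^ 2 / 2 + c) * gaussianPDFReal (m + t * v) v x := by
    intro x
    rw [gaussianPDFReal, gaussianPDFReal, mul_comm (rexp (m * t + ↑v * t ^ 2 / 2 + c)),
      mul_assoc ((√(2 * π * (v:ℝ)))⁻¹), mul_assoc ((√(2 * π * (v:ℝ)))⁻¹),
      ← Real.exp_add, ← Real.exp_add]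
    congr 1
    field_simp
    ring
  rw [gaussianReal_of_var_ne_zero _ hv,
    lintegral_withDensity_eq_lintegral_mul _ (measurable_gaussianPDF _ _) hg]
  have h2 : ∀ x : ℝ, (gaussianPDF m v * fun x => ENNReal.ofReal (rexp (t * x + c))) x
      = ENNReal.ofReal (rexp (m * t + ↑v * t ^ 2 / 2 + c)) * gaussianPDF (m + t * v) v x := by
    intro x
    simp only [Pi.mul_apply, gaussianPDF]
    rw [← ENNReal.ofReal_mul (gaussianPDFReal_nonneg _ _ _), key x,
      ENNReal.ofReal_mul (Real.exp_pos _).le]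
  rw [lintegral_congr h2, lintegral_const_mul _ (measurable_gaussianPDF _ _),
    lintegral_gaussianPDF_eq_one _ hv, mul_one]

lemma gaussian_withDensity (m m' : ℝ) {v : ℝ≥0} (hv : v ≠ 0) :
    gaussianReal m v = (gaussianReal m' v).withDensity
      (fun x => ENNReal.ofReal (rexp (((m - m') / (v:ℝ)) * x
        + (-((m - m') * (m + m')) / (2 * (v:ℝ)))))) := by
  have hv' : (0:ℝ) < (v:ℝ) := by positivity
  have hg : Measurable fun x : ℝ => ENNReal.ofReal (rexp (((m - m') / (v:ℝ)) * x
      + (-((m - m') * (m + m')) / (2 * (v:ℝ))))) := by fun_prop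
  rw [gaussianReal_of_var_ne_zero _ hv, gaussianReal_of_var_ne_zero _ hv,
    ← withDensity_mul _ (measurable_gaussianPDF _ _) hg]
  congr 1
  funext x
  simp only [Pi.mul_apply, gaussianPDF]
  rw [← ENNReal.ofReal_mul (gaussianPDFReal_nonneg _ _ _)]
  congr 1
  rw [gaussianPDFReal, gaussianPDFReal, mul_assoc ((√(2 * π * (v:ℝ)))⁻¹), ← Real.exp_add]
  congr 1
  field_simp
  ring

lemma argmaxLeast_eq_iff {K : ℕ} [NeZero K] (f : Fin K → ℝ) (i : Fin K) :
    argmaxLeast f = i ↔ (∀ j, f j ≤ f i) ∧ ∀ k, k < i → ¬ (∀ j, f j ≤ f k) := by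
  have hne : (Finset.univ.filter fun i => ∀ j, f j ≤ f i).Nonempty := by
    obtain ⟨i, -, hi⟩ := Finset.exists_max_image Finset.univ f
      ⟨⟨0, Nat.pos_of_ne_zero (NeZero.ne K)⟩, Finset.mem_univ _⟩
    exact ⟨i, Finset.mem_filter.mpr ⟨Finset.mem_univ _, fun j => hi j (Finset.mem_univ j)⟩⟩
  unfold argmaxLeast
  constructor
  · intro h
    subst h
    constructor
    · simpa using (Finset.mem_filter.mp (Finset.min'_mem _ hne)).2
    · intro k hk hkmem
      exact absurd hk (not_lt.mpr (Finset.min'_le _ _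
        (Finset.mem_filter.mpr ⟨Finset.mem_univ _, hkmem⟩)))
  · rintro ⟨h1, h2⟩
    refine le_antisymm (Finset.min'_le _ _ (Finset.mem_filter.mpr ⟨Finset.mem_univ _, h1⟩)) ?_
    refine le_of_not_gt fun hlt => h2 _ hlt ?_
    simpa using (Finset.mem_filter.mp (Finset.min'_mem _ hne)).2

lemma measurable_argmaxLeast {K : ℕ} [NeZero K] :
    Measurable (argmaxLeast (K := K)) := by
  apply measurable_to_countable'
  intro i
  have heq : argmaxLeast ⁻¹' {i}
      = {g : Fin K → ℝ | ∀ j, g j ≤ g i} ∩ ⋂ k : Fin K,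
          {g : Fin K → ℝ | k < i → ¬ ∀ j, g j ≤ g k} := by
    ext g
    simp only [Set.mem_preimage, Set.mem_singleton_iff, argmaxLeast_eq_iff, Set.mem_inter_iff,
      Set.mem_iInter, Set.mem_setOf_eq]
  rw [heq]
  have h1 : ∀ a b : Fin K, MeasurableSet {g : Fin K → ℝ | g a ≤ g b} := fun a b =>
    measurableSet_le (measurable_pi_apply a) (measurable_pi_apply b)
  refine MeasurableSet.inter ?_ (MeasurableSet.iInter fun k => ?_)
  · have : {g : Fin K → ℝ | ∀ j, g j ≤ g i} = ⋂ j, {g : Fin K → ℝ | g j ≤ g i} := by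
      ext g; simp
    rw [this]
    exact MeasurableSet.iInter fun j => h1 j i
  · by_cases hk : k < i
    · have : {g : Fin K → ℝ | k < i → ¬ ∀ j, g j ≤ g k}
          = (⋂ j, {g : Fin K → ℝ | g j ≤ g k})ᶜ := by
        ext g; simp [hk]
      rw [this]
      exact (MeasurableSet.iInter fun j => h1 j k).compl
    · have : {g : Fin K → ℝ | k < i → ¬ ∀ j, g j ≤ g k} = Set.univ := by
        ext g; simp [hk]
      rw [this]
      exact MeasurableSet.univ

/-- **Rényi privacy of the GNMax aggregator.** For vote histograms `n, n'` with
`‖n − n'‖₂² ≤ 2`, the laws `P, P'` of the noisy argmax (with iid `N(0, σ²)` noise added to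
each count, ties broken towards the smallest index) satisfy `D_α(P ‖ P') ≤ α / σ²` for every
`α > 1`. -/
theorem gnmax_renyi_privacy {K : ℕ} [NeZero K] (σ : ℝ) (hσ : 0 < σ)
    (n n' : Fin K → ℝ) (hsens : ∑ j : Fin K, (n j - n' j) ^ 2 ≤ 2)
    (α : ℝ) (hα : 1 < α) :
    renyiDiv α
      ((Measure.pi fun _ : Fin K => gaussianReal 0 (σ ^ 2).toNNReal).map
        fun z => argmaxLeast fun j => n j + z j)
      ((Measure.pi fun _ : Fin K => gaussianReal 0 (σ ^ 2).toNNReal).map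
        fun z => argmaxLeast fun j => n' j + z j)

      ≤ ((α / σ ^ 2 : ℝ) : EReal) := by
  have hα0 : (0:ℝ) < α := by linarith
  set v : ℝ≥0 := (σ ^ 2).toNNReal with hvdef
  have hV : ((v:ℝ)) = σ ^ 2 := Real.coe_toNNReal _ (by positivity)
  have hV0 : (0:ℝ) < (v:ℝ) := by rw [hV]; positivity
  have hv : v ≠ 0 := by
    intro h
    rw [h] at hV0
    simp at hV0
  set μ : Measure (Fin K → ℝ) := Measure.pi fun j => gaussianReal (n j) v with hμdef
  set ν : Measure (Fin K → ℝ) := Measure.pi fun j => gaussianReal (n' j) v with hνdef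
  set g : Fin K → ℝ → ℝ≥0∞ := fun j x => ENNReal.ofReal (rexp (((n j - n' j) / (v:ℝ)) * x
      + (-((n j - n' j) * (n j + n' j)) / (2 * (v:ℝ))))) with hgdef
  set G : (Fin K → ℝ) → ℝ≥0∞ := fun z => ∏ j, g j (z j) with hGdef
  have hgmeas : ∀ j, Measurable (g j) := fun j => by fun_prop
  have hGmeas : Measurable G :=
    Finset.measurable_prod _ fun j _ => (hgmeas j).comp (measurable_pi_apply j)
  have h2 : μ = ν.withDensity G := by
    haveI : ∀ j, SigmaFinite ((gaussianReal (n' j) v).withDensity (g j)) := fun j => by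
      rw [← gaussian_withDensity _ _ hv]; infer_instance
    rw [hμdef, hνdef, hGdef]
    rw [show (fun j => gaussianReal (n j) v)
        = fun j => (gaussianReal (n' j) v).withDensity (g j) from
      funext fun j => gaussian_withDensity (n j) (n' j) hv]
    exact pi_withDensity _ g hgmeas
  -- the laws P and Q
  have hshift : ∀ m : Fin K → ℝ, MeasurePreserving (fun z : Fin K → ℝ => fun j => m j + z j)
      (Measure.pi fun _ : Fin K => gaussianReal 0 v) (Measure.pi fun j => gaussianReal (m j) v) := by
    intro m
    refine measurePreserving_pi _ _ fun j => ⟨measurable_const_add _, ?_⟩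
    have he : HAdd.hAdd (m j) = (· + m j) := funext fun x => add_comm _ _
    rw [he, gaussianReal_map_add_const, zero_add]
  have hPdef : (Measure.pi fun _ : Fin K => gaussianReal 0 v).map
      (fun z => argmaxLeast fun j => n j + z j) = μ.map argmaxLeast := by
    rw [hμdef, ← (hshift n).map_eq, Measure.map_map measurable_argmaxLeast (hshift n).measurable]
    rfl
  have hQdef : (Measure.pi fun _ : Fin K => gaussianReal 0 v).map
      (fun z => argmaxLeast fun j => n' j + z j) = ν.map argmaxLeast := by
    rw [hνdef, ← (hshift n').map_eq, Measure.map_map measurable_argmaxLeast (hshift n').measurable]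
    rfl
  set P : Measure (Fin K) := μ.map argmaxLeast with hPd
  set Q : Measure (Fin K) := ν.map argmaxLeast with hQd
  haveI : IsProbabilityMeasure P := Measure.isProbabilityMeasure_map measurable_argmaxLeast.aemeasurable
  haveI : IsProbabilityMeasure Q := Measure.isProbabilityMeasure_map measurable_argmaxLeast.aemeasurable
  have habs : μ ≪ ν := h2 ▸ withDensity_absolutelyContinuous ν G
  have habsPQ : P ≪ Q := habs.map measurable_argmaxLeast
  rw [hPdef, hQdef, renyiDiv, if_pos habsPQ]
  -- the total mass of G ^ α against ν
  set S : ℝ := ∑ j, (n j - n' j) ^ 2 with hSdef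
  have hS0 : 0 ≤ S := Finset.sum_nonneg fun j _ => sq_nonneg _
  have hT : ∫⁻ z, G z ^ α ∂ν = ENNReal.ofReal (rexp (α * (α - 1) * S / (2 * (v:ℝ)))) := by
    have h1d : ∀ j, ∫⁻ x, g j x ^ α ∂(gaussianReal (n' j) v)
        = ENNReal.ofReal (rexp (α * (α - 1) * (n j - n' j) ^ 2 / (2 * (v:ℝ)))) := by
      intro j
      have hrw : ∀ x : ℝ, g j x ^ α = ENNReal.ofReal
          (rexp ((α * ((n j - n' j) / (v:ℝ))) * x
            + (α * (-((n j - n' j) * (n j + n' j)) / (2 * (v:ℝ)))))) := by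
        intro x
        rw [hgdef]
        rw [ENNReal.ofReal_rpow_of_pos (Real.exp_pos _), ← Real.exp_mul]
        congr 1
        ring
      rw [lintegral_congr hrw, lintegral_exp_gaussian _ hv]
      congr 1
      have hVne : (v:ℝ) ≠ 0 := hV0.ne'
      field_simp
      ring
    calc ∫⁻ z, G z ^ α ∂ν = ∫⁻ z, ∏ j, g j (z j) ^ α ∂ν := by
          refine lintegral_congr fun z => ?_
          rw [hGdef]
          exact (ENNReal.prod_rpow_of_nonneg hα0.le).symm
      _ = ∏ j, ∫⁻ x, g j x ^ α ∂(gaussianReal (n' j) v) := by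
          rw [hνdef]
          exact lintegral_pi_prod _ _ fun j => (hgmeas j).pow_const α
      _ = ∏ j, ENNReal.ofReal (rexp (α * (α - 1) * (n j - n' j) ^ 2 / (2 * (v:ℝ)))) :=
          Finset.prod_congr rfl fun j _ => h1d j
      _ = ENNReal.ofReal (∏ j, rexp (α * (α - 1) * (n j - n' j) ^ 2 / (2 * (v:ℝ)))) :=
          (ENNReal.ofReal_prod_of_nonneg fun j _ => (Real.exp_pos _).le).symm
      _ = ENNReal.ofReal (rexp (α * (α - 1) * S / (2 * (v:ℝ)))) := by
          rw [← Real.exp_sum]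
          congr 1
          rw [hSdef, Finset.mul_sum, Finset.sum_div]
  -- Hölder per atom
  have hint : ∫⁻ x, (P.rnDeriv Q x) ^ α ∂Q ≤ ∫⁻ z, G z ^ α ∂ν := by
    set C : Fin K → Set (Fin K → ℝ) := fun i => argmaxLeast ⁻¹' {i} with hCdef
    have hmC : ∀ i, MeasurableSet (C i) :=
      fun i => measurable_argmaxLeast (measurableSet_singleton i)
    have hQC : ∀ i, Q {i} = ν (C i) :=
      fun i => Measure.map_apply measurable_argmaxLeast (measurableSet_singleton i)
    have hPC : ∀ i, P {i} = ∫⁻ z in C i, G z ∂ν := by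
      intro i
      rw [hPd, Measure.map_apply measurable_argmaxLeast (measurableSet_singleton i), h2,
        withDensity_apply _ (hmC i)]
    have hkey : ∀ i, (P.rnDeriv Q i) ^ α * Q {i} ≤ ∫⁻ z in C i, G z ^ α ∂ν := by
      intro i
      by_cases hQ0 : Q {i} = 0
      · simp [hQ0]
      · set A := ∫⁻ z in C i, G z ^ α ∂ν with hAdef
        set B := Q {i} with hBdef
        have hQt : B ≠ ⊤ := measure_ne_top _ _
        have hrn : P.rnDeriv Q i * B = P {i} := by
          rw [hBdef, ← lintegral_singleton (P.rnDeriv Q) i,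
            Measure.setLIntegral_rnDeriv habsPQ]
        have hpq : Real.HolderConjugate α (α / (α - 1)) := by
          exact Real.HolderConjugate.conjExponent hα
        have hone : ∫⁻ _ in C i, (1:ℝ≥0∞) ∂ν = B := by
          rw [setLIntegral_one, ← hQC i]
        have hHold : P {i} ≤ A ^ (1/α) * B ^ (1/(α/(α-1))) := by
          have hH := ENNReal.lintegral_mul_le_Lp_mul_Lq (ν.restrict (C i)) hpq
            hGmeas.aemeasurable (aemeasurable_const (b := (1:ℝ≥0∞)))
          simp only [Pi.mul_apply, mul_one, ENNReal.one_rpow, lintegral_const, one_mul,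
            Measure.restrict_apply_univ] at hH
          rw [hPC i, hBdef, hQC i]
          exact hH
        have hP2 : P {i} ^ α ≤ A * B ^ (α - 1) := by
          calc P {i} ^ α ≤ (A ^ (1/α) * B ^ (1/(α/(α-1)))) ^ α :=
                ENNReal.rpow_le_rpow hHold hα0.le
            _ = A * B ^ (α - 1) := by
                rw [ENNReal.mul_rpow_of_nonneg _ _ hα0.le, ← ENNReal.rpow_mul,
                  ← ENNReal.rpow_mul]
                have e1 : 1/α*α = 1 := by field_simp
                have e2 : 1/(α/(α-1))*α = α - 1 := by
                  have h1 : α - 1 ≠ 0 := by linarith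
                  field_simp
                rw [e1, e2, ENNReal.rpow_one]
        have hrn' : B * P.rnDeriv Q i = P {i} := by rw [mul_comm]; exact hrn
        have hrd : P.rnDeriv Q i = P {i} / B := (ENNReal.eq_div_iff hQ0 hQt).mpr hrn'
        rw [hrd]
        calc (P {i} / B) ^ α * B = P {i} ^ α / B ^ α * B := by
              rw [ENNReal.div_rpow_of_nonneg _ _ hα0.le]
          _ ≤ (A * B ^ (α-1)) / B ^ α * B := by gcongr
          _ = A := by
              rw [mul_div_assoc, ← ENNReal.rpow_sub _ _ hQ0 hQt,
                show α - 1 - α = -1 by ring, ENNReal.rpow_neg_one, mul_assoc,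
                ENNReal.inv_mul_cancel hQ0 hQt, mul_one]
    have hU : ⋃ i, C i = Set.univ := by
      ext z
      simp only [Set.mem_iUnion, Set.mem_univ, iff_true, hCdef, Set.mem_preimage,
        Set.mem_singleton_iff]
      exact ⟨argmaxLeast z, rfl⟩
    have hdisj : Pairwise (Function.onFun Disjoint C) := by
      intro i j hij
      exact Disjoint.preimage _ (by simp [hij])
    calc ∫⁻ x, (P.rnDeriv Q x) ^ α ∂Q = ∑ i, (P.rnDeriv Q i) ^ α * Q {i} :=
          lintegral_fintype _
      _ ≤ ∑ i, ∫⁻ z in C i, G z ^ α ∂ν := Finset.sum_le_sum fun i _ => hkey i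
      _ = ∫⁻ z, G z ^ α ∂ν := by
          rw [← tsum_fintype (L := .unconditional _), ← lintegral_iUnion hmC hdisj, hU, setLIntegral_univ]
  -- conclude
  have hlog : ENNReal.log (∫⁻ x, (P.rnDeriv Q x) ^ α ∂Q)
      ≤ ((α * (α - 1) * S / (2 * (v:ℝ)) : ℝ) : EReal) := by
    rw [show ((α * (α - 1) * S / (2 * (v:ℝ)) : ℝ) : EReal)
        = ENNReal.log (ENNReal.ofReal (rexp (α * (α - 1) * S / (2 * (v:ℝ))))) by
      rw [ENNReal.log_ofReal_of_pos (Real.exp_pos _), Real.log_exp]]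
    exact ENNReal.log_monotone (hint.trans_eq hT)
  have hαinv : (0:ℝ) < (α - 1)⁻¹ := by
    have : (0:ℝ) < α - 1 := by linarith
    positivity
  have hfin : α * (α - 1) * S / (2 * (v:ℝ)) * (α - 1)⁻¹ ≤ α / σ ^ 2 := by
    rw [hV, div_mul_eq_mul_div, div_le_div_iff₀ (by positivity) (by positivity)]
    have h1 : α * (α - 1) * S * (α - 1)⁻¹ = α * S := by
      have hα1 : α - 1 ≠ 0 := by linarith
      field_simp
    rw [h1]
    nlinarith [mul_le_mul_of_nonneg_left hsens hα0.le, sq_nonneg σ,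
      mul_nonneg (mul_nonneg hα0.le hS0) (sq_nonneg σ)]
  set L := ENNReal.log (∫⁻ x, (P.rnDeriv Q x) ^ α ∂Q) with hLdef
  clear_value L
  revert hlog
  induction L with
  | bot =>
    intro hlog
    rw [EReal.mul_bot_of_pos (by exact_mod_cast hαinv)]
    exact bot_le
  | coe r =>
    intro hlog
    have hr : r ≤ α * (α - 1) * S / (2 * (v:ℝ)) := EReal.coe_le_coe_iff.mp hlog
    rw [← EReal.coe_mul, EReal.coe_le_coe_iff]
    calc (α - 1)⁻¹ * r ≤ (α - 1)⁻¹ * (α * (α - 1) * S / (2 * (v:ℝ))) :=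
          mul_le_mul_of_nonneg_left hr hαinv.le
      _ ≤ α / σ ^ 2 := by rw [mul_comm]; exact hfin
  | top =>
    intro hlog
    exact absurd hlog (EReal.coe_lt_top _).not_ge
end

section
/- Rényi privacy of the noisy confidence check in Confident-GNMax: Let K ∈ ℕ, σ₁ > 0, a threshold T ∈ ℝ, and let n, n' ∈ ℝ^K satisfy |n_j − n'_j| ≤ 1 for every j. Then |max_j n_j − max_j n'_j| ≤ 1, and, with Z ∼ N(0, σ₁²), the Bernoulli distributions P and P' of the indicator events {max_j n_j + Z ≥ T} and {max_j n'_j + Z ≥ T} satisfy, for every α > 1, D_α(P ‖ P') ≤ α / (2σ₁²). -/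
open MeasureTheory ProbabilityTheory
open scoped NNReal ENNReal Classical

section Aux

variable {v : ℝ≥0}

lemma measurable_decide_le (T : ℝ) : Measurable (fun z : ℝ => decide (T ≤ z)) := by
  refine measurable_to_countable' (fun b => ?_)
  cases b
  · have : (fun z : ℝ => decide (T ≤ z)) ⁻¹' {false} = Set.Iio T := by
      ext z; simp [not_le]
    rw [this]; exact measurableSet_Iio
  · have : (fun z : ℝ => decide (T ≤ z)) ⁻¹' {true} = Set.Ici T := by
      ext z; simp [Set.mem_Ici]
    rw [this]; exact measurableSet_Ici

lemma gaussianPDF_ratio_rpow (hv : v ≠ 0) (m m' α x : ℝ) :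
    (gaussianPDF m v x / gaussianPDF m' v x) ^ α * gaussianPDF m' v x
      = ENNReal.ofReal (Real.exp (α * (α - 1) * (m - m') ^ 2 / (2 * (v : ℝ))))
        * gaussianPDF (m' + α * (m - m')) v x := by
  have hvr : 0 < (v : ℝ) := by positivity
  have hpos : ∀ μ : ℝ, 0 < gaussianPDFReal μ v x := fun μ => gaussianPDFReal_pos μ v x hv
  rw [gaussianPDF, gaussianPDF, gaussianPDF, ← ENNReal.ofReal_div_of_pos (hpos m'),
      ENNReal.ofReal_rpow_of_pos (div_pos (hpos m) (hpos m')),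
      ← ENNReal.ofReal_mul (Real.rpow_nonneg (div_pos (hpos m) (hpos m')).le α),
      ← ENNReal.ofReal_mul (Real.exp_nonneg _)]
  congr 1
  simp only [gaussianPDFReal]
  rw [mul_div_mul_left _ _ (ne_of_gt (by positivity : (0:ℝ) < (Real.sqrt (2 * Real.pi * v))⁻¹)),
      ← Real.exp_sub, ← Real.exp_mul,
      mul_comm ((Real.sqrt (2 * Real.pi * (v:ℝ)))⁻¹) (Real.exp _), mul_comm ((Real.sqrt (2 * Real.pi * (v:ℝ)))⁻¹) (Real.exp _),
      ← mul_assoc, ← mul_assoc, ← Real.exp_add, ← Real.exp_add]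
  have hv2 : (2 * (v:ℝ)) ≠ 0 := by positivity
  congr 2
  field_simp
  ring

lemma lintegral_ratio_rpow (hv : v ≠ 0) (m m' α : ℝ) :
    ∫⁻ x, (gaussianPDF m v x / gaussianPDF m' v x) ^ α ∂(gaussianReal m' v)
      = ENNReal.ofReal (Real.exp (α * (α - 1) * (m - m') ^ 2 / (2 * (v : ℝ)))) := by
  have hmeas : Measurable fun x => (gaussianPDF m v x / gaussianPDF m' v x) ^ α :=
    ((measurable_gaussianPDF m v).div (measurable_gaussianPDF m' v)).pow measurable_const
  rw [gaussianReal_of_var_ne_zero _ hv,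
      lintegral_withDensity_eq_lintegral_mul _ (measurable_gaussianPDF m' v) hmeas]
  have : ∀ x, (gaussianPDF m' v * fun x => (gaussianPDF m v x / gaussianPDF m' v x) ^ α) x
      = ENNReal.ofReal (Real.exp (α * (α - 1) * (m - m') ^ 2 / (2 * (v : ℝ))))
        * gaussianPDF (m' + α * (m - m')) v x := by
    intro x
    simp only [Pi.mul_apply]
    rw [mul_comm]
    exact gaussianPDF_ratio_rpow hv m m' α x
  rw [lintegral_congr this, lintegral_const_mul _ (measurable_gaussianPDF _ _),
      lintegral_gaussianPDF_eq_one _ hv, mul_one]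

lemma setLIntegral_ratio (hv : v ≠ 0) (m m' : ℝ) {s : Set ℝ} (hs : MeasurableSet s) :
    ∫⁻ x in s, gaussianPDF m v x / gaussianPDF m' v x ∂(gaussianReal m' v)
      = gaussianReal m v s := by
  rw [gaussianReal_of_var_ne_zero _ hv,
      setLIntegral_withDensity_eq_setLIntegral_mul _ (measurable_gaussianPDF m' v)
        (show Measurable fun x => gaussianPDF m v x / gaussianPDF m' v x from
          (measurable_gaussianPDF m v).div (measurable_gaussianPDF m' v)) hs]
  have : ∀ x, (gaussianPDF m' v * fun x => gaussianPDF m v x / gaussianPDF m' v x) x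
      = gaussianPDF m v x := by
    intro x
    simp only [Pi.mul_apply]
    exact ENNReal.mul_div_cancel (gaussianPDF_pos m' hv x).ne' ENNReal.ofReal_ne_top
  rw [setLIntegral_congr_fun hs (fun x _ => this x),
      gaussianReal_apply _ hv]

lemma gaussianReal_pos_of_volume_pos (hv : v ≠ 0) (m : ℝ) {s : Set ℝ}
    (h : volume s ≠ 0) : gaussianReal m v s ≠ 0 := by
  intro h0
  exact h (gaussianReal_absolutelyContinuous' m hv h0)

lemma holder_piece (hv : v ≠ 0) (m m' : ℝ) {α : ℝ} (hα : 1 < α) {s : Set ℝ}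
    (hs : MeasurableSet s) (hsvol : volume s ≠ 0) :
    (gaussianReal m v s) ^ α * (gaussianReal m' v s) ^ (1 - α)
      ≤ ∫⁻ x in s, (gaussianPDF m v x / gaussianPDF m' v x) ^ α ∂(gaussianReal m' v) := by
  set Q := gaussianReal m' v with hQ
  set r : ℝ → ℝ≥0∞ := fun x => gaussianPDF m v x / gaussianPDF m' v x with hr
  have hrmeas : Measurable r := (measurable_gaussianPDF m v).div (measurable_gaussianPDF m' v)
  have hα0 : (0:ℝ) < α := lt_trans one_pos hα
  set X := ∫⁻ x in s, r x ^ α ∂Q with hX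
  have hq0 : Q s ≠ 0 := gaussianReal_pos_of_volume_pos hv m' hsvol
  have hqtop : Q s ≠ ⊤ := (measure_lt_top Q s).ne
  have hconj : α.HolderConjugate (Real.conjExponent α) := Real.HolderConjugate.conjExponent hα
  have hH := ENNReal.lintegral_mul_le_Lp_mul_Lq (Q.restrict s) hconj hrmeas.aemeasurable
    (aemeasurable_const (b := (1:ℝ≥0∞)))
  simp only [mul_one, Pi.mul_apply, Pi.one_apply] at hH
  have h1 : ∫⁻ x, (1:ℝ≥0∞) ^ (Real.conjExponent α) ∂(Q.restrict s) = Q s := by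
    simp [ENNReal.one_rpow, Measure.restrict_apply_univ]
  rw [h1] at hH
  have hPle : gaussianReal m v s ≤ X ^ (1/α) * Q s ^ (1 / Real.conjExponent α) := by
    rw [← setLIntegral_ratio hv m m' hs]
    exact hH
  have hcinv : 1 / Real.conjExponent α = 1 - 1/α := by
    have h1 : α - 1 ≠ 0 := sub_ne_zero.2 (ne_of_gt hα)
    simp only [Real.conjExponent]
    rw [one_div_div]
    field_simp
  have hpow := ENNReal.rpow_le_rpow hPle hα0.le
  rw [ENNReal.mul_rpow_of_nonneg _ _ hα0.le, ← ENNReal.rpow_mul, ← ENNReal.rpow_mul,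
      one_div, inv_mul_cancel₀ hα0.ne', ENNReal.rpow_one, hcinv] at hpow
  have harith : (1 - 1/α) * α = α - 1 := by field_simp
  rw [harith] at hpow
  calc (gaussianReal m v s) ^ α * Q s ^ (1 - α)
      ≤ (X * Q s ^ (α - 1)) * Q s ^ (1 - α) := mul_le_mul_left hpow _
    _ = X * (Q s ^ (α - 1) * Q s ^ (1 - α)) := by rw [mul_assoc]
    _ = X := by
        rw [← ENNReal.rpow_add _ _ hq0 hqtop]
        norm_num
lemma preim_true (T : ℝ) : (fun z : ℝ => decide (T ≤ z)) ⁻¹' {true} = Set.Ici T := by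
  ext z; simp [Set.mem_Ici]

lemma preim_false (T : ℝ) : (fun z : ℝ => decide (T ≤ z)) ⁻¹' {false} = Set.Iio T := by
  ext z; simp [not_le]

lemma renyi_bool_le (hv : v ≠ 0) (m m' T : ℝ) {α : ℝ} (hα : 1 < α) :
    renyiDiv α ((gaussianReal m v).map (fun z => decide (T ≤ z)))
      ((gaussianReal m' v).map (fun z => decide (T ≤ z)))
      ≤ (((α * (m - m') ^ 2 / (2 * (v : ℝ)) : ℝ)) : EReal) := by
  have hα0 : (0:ℝ) < α := lt_trans one_pos hα
  have hg : Measurable (fun z : ℝ => decide (T ≤ z)) := measurable_decide_le T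
  set P := gaussianReal m v with hP
  set Q := gaussianReal m' v with hQ'
  set Pb := P.map (fun z : ℝ => decide (T ≤ z)) with hPb
  set Qb := Q.map (fun z : ℝ => decide (T ≤ z)) with hQb
  have hPbt : Pb {true} = P (Set.Ici T) := by
    rw [hPb, Measure.map_apply hg (measurableSet_singleton _), preim_true]
  have hPbf : Pb {false} = P (Set.Iio T) := by
    rw [hPb, Measure.map_apply hg (measurableSet_singleton _), preim_false]
  have hQbt : Qb {true} = Q (Set.Ici T) := by
    rw [hQb, Measure.map_apply hg (measurableSet_singleton _), preim_true]
  have hQbf : Qb {false} = Q (Set.Iio T) := by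
    rw [hQb, Measure.map_apply hg (measurableSet_singleton _), preim_false]
  have hQt0 : Qb {true} ≠ 0 := by
    rw [hQbt]
    exact gaussianReal_pos_of_volume_pos hv m' (by simp [Real.volume_Ici])
  have hQf0 : Qb {false} ≠ 0 := by
    rw [hQbf]
    exact gaussianReal_pos_of_volume_pos hv m' (by simp [Real.volume_Iio])
  have hQttop : Qb {true} ≠ ⊤ := by
    rw [hQbt]; exact (measure_lt_top Q _).ne
  have hQftop : Qb {false} ≠ ⊤ := by
    rw [hQbf]; exact (measure_lt_top Q _).ne
  set h : Bool → ℝ≥0∞ := fun b => Pb {b} / Qb {b} with hh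
  have hhm : Measurable h := measurable_of_countable h
  have hPQ : Pb = Qb.withDensity h := by
    refine Measure.ext_of_singleton (fun b => ?_)
    rw [withDensity_apply _ (measurableSet_singleton b), lintegral_singleton]
    cases b
    · rw [hh]; exact (ENNReal.div_mul_cancel hQf0 hQftop).symm
    · rw [hh]; exact (ENNReal.div_mul_cancel hQt0 hQttop).symm
  have hac : Pb ≪ Qb := by
    rw [hPQ]; exact withDensity_absolutelyContinuous _ _
  rw [renyiDiv, if_pos hac]
  have hrn : ∫⁻ x, Pb.rnDeriv Qb x ^ α ∂Qb = ∫⁻ x, h x ^ α ∂Qb := by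
    refine lintegral_congr_ae ?_
    filter_upwards [hPQ ▸ Qb.rnDeriv_withDensity hhm] with x hx
    rw [hx]
  have hsum : ∫⁻ x, h x ^ α ∂Qb = h true ^ α * Qb {true} + h false ^ α * Qb {false} := by
    rw [lintegral_fintype, Fintype.sum_bool]
  have key : ∀ p q : ℝ≥0∞, q ≠ 0 → q ≠ ⊤ → (p / q) ^ α * q = p ^ α * q ^ (1 - α) := by
    intro p q h0 ht
    rw [div_eq_mul_inv, ENNReal.mul_rpow_of_nonneg _ _ hα0.le, ENNReal.inv_rpow,
        ← ENNReal.rpow_neg, mul_assoc]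
    congr 1
    nth_rewrite 2 [← ENNReal.rpow_one q]
    rw [← ENNReal.rpow_add _ _ h0 ht]
    congr 1
    ring
  have hEineq : ∫⁻ x, h x ^ α ∂Qb
      ≤ ENNReal.ofReal (Real.exp (α * (α - 1) * (m - m') ^ 2 / (2 * (v : ℝ)))) := by
    rw [hsum, hh]
    simp only []
    rw [key _ _ hQt0 hQttop, key _ _ hQf0 hQftop, hPbt, hPbf, hQbt, hQbf]
    have h1 := holder_piece hv m m' hα (measurableSet_Ici (a := T)) (by simp [Real.volume_Ici])
    have h2 := holder_piece hv m m' hα (measurableSet_Iio (a := T)) (by simp [Real.volume_Iio])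
    calc P (Set.Ici T) ^ α * Q (Set.Ici T) ^ (1 - α)
          + P (Set.Iio T) ^ α * Q (Set.Iio T) ^ (1 - α)
        ≤ (∫⁻ x in Set.Ici T, (gaussianPDF m v x / gaussianPDF m' v x) ^ α ∂Q)
          + ∫⁻ x in Set.Iio T, (gaussianPDF m v x / gaussianPDF m' v x) ^ α ∂Q :=
          add_le_add h1 h2
      _ = ∫⁻ x, (gaussianPDF m v x / gaussianPDF m' v x) ^ α ∂Q := by
          rw [← Set.compl_Ici (a := T)]
          exact lintegral_add_compl _ measurableSet_Ici
      _ = ENNReal.ofReal (Real.exp (α * (α - 1) * (m - m') ^ 2 / (2 * (v : ℝ)))) :=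
          lintegral_ratio_rpow hv m m' α
  have hlog : ENNReal.log (∫⁻ x, Pb.rnDeriv Qb x ^ α ∂Qb)
      ≤ ((α * (α - 1) * (m - m') ^ 2 / (2 * (v : ℝ)) : ℝ) : EReal) := by
    rw [hrn]
    calc ENNReal.log (∫⁻ x, h x ^ α ∂Qb)
        ≤ ENNReal.log (ENNReal.ofReal
            (Real.exp (α * (α - 1) * (m - m') ^ 2 / (2 * (v : ℝ))))) :=
          ENNReal.log_monotone hEineq
      _ = ((α * (α - 1) * (m - m') ^ 2 / (2 * (v : ℝ)) : ℝ) : EReal) := by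
          rw [ENNReal.log_ofReal_of_pos (Real.exp_pos _), Real.log_exp]
  have hnn : (0:EReal) ≤ (((α - 1)⁻¹ : ℝ) : EReal) := by
    exact EReal.coe_nonneg.2 (inv_nonneg.2 (by linarith))
  calc (((α - 1)⁻¹ : ℝ) : EReal) * ENNReal.log (∫⁻ x, Pb.rnDeriv Qb x ^ α ∂Qb)
      ≤ (((α - 1)⁻¹ : ℝ) : EReal)
          * ((α * (α - 1) * (m - m') ^ 2 / (2 * (v : ℝ)) : ℝ) : EReal) :=
        mul_le_mul_of_nonneg_left hlog hnn
    _ = ((α * (m - m') ^ 2 / (2 * (v : ℝ)) : ℝ) : EReal) := by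
        rw [← EReal.coe_mul]
        congr 1
        have hα1 : α - 1 ≠ 0 := sub_ne_zero.2 (ne_of_gt hα)
        field_simp
end Aux


/-- **Rényi privacy of the noisy confidence check in Confident-GNMax.** If the histograms
`n, n'` satisfy `|n j − n' j| ≤ 1` for every class `j`, then their maxima differ by at
most `1`, and with `Z ∼ N(0, σ₁²)` the Bernoulli laws `P, P'` of the indicator events
`{max_j n_j + Z ≥ T}` and `{max_j n'_j + Z ≥ T}` satisfy `D_α(P ‖ P') ≤ α / (2σ₁²)`
for every `α > 1`. -/
theorem confident_gnmax_threshold_renyi_privacy {K : ℕ} [NeZero K]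
    (σ₁ : ℝ) (hσ₁ : 0 < σ₁) (T : ℝ) (n n' : Fin K → ℝ)
    (hsens : ∀ j, |n j - n' j| ≤ 1) :
    |(Finset.univ.sup' Finset.univ_nonempty n) - (Finset.univ.sup' Finset.univ_nonempty n')|
        ≤ 1 ∧
    ∀ α : ℝ, 1 < α →
      renyiDiv α
        ((gaussianReal 0 (σ₁ ^ 2).toNNReal).map
          fun z => decide (T ≤ Finset.univ.sup' Finset.univ_nonempty n + z))
        ((gaussianReal 0 (σ₁ ^ 2).toNNReal).map
          fun z => decide (T ≤ Finset.univ.sup' Finset.univ_nonempty n' + z))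
        ≤ ((α / (2 * σ₁ ^ 2) : ℝ) : EReal) := by
  have hm : |(Finset.univ.sup' Finset.univ_nonempty n) -
      (Finset.univ.sup' Finset.univ_nonempty n')| ≤ 1 := by
    rw [abs_sub_le_iff]
    constructor
    · rw [sub_le_iff_le_add]
      refine Finset.sup'_le _ _ fun j _ => ?_
      have h1 : n j - n' j ≤ 1 := (abs_le.1 (hsens j)).2
      have h2 : n' j ≤ Finset.univ.sup' Finset.univ_nonempty n' := Finset.le_sup' _ (Finset.mem_univ j)
      linarith
    · rw [sub_le_iff_le_add]
      refine Finset.sup'_le _ _ fun j _ => ?_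
      have h1 : -(1:ℝ) ≤ n j - n' j := (abs_le.1 (hsens j)).1
      have h2 : n j ≤ Finset.univ.sup' Finset.univ_nonempty n := Finset.le_sup' _ (Finset.mem_univ j)
      linarith
  refine ⟨hm, fun α hα => ?_⟩
  set m := Finset.univ.sup' Finset.univ_nonempty n with hmdef
  set m' := Finset.univ.sup' Finset.univ_nonempty n' with hm'def
  set v : ℝ≥0 := (σ₁ ^ 2).toNNReal with hvdef
  have hv : v ≠ 0 := (Real.toNNReal_pos.2 (by positivity)).ne'
  have hvr : (v : ℝ) = σ₁ ^ 2 := Real.coe_toNNReal _ (sq_nonneg σ₁)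
  have hmap : ∀ c : ℝ, (gaussianReal 0 v).map (fun z => decide (T ≤ c + z))
      = (gaussianReal c v).map (fun z => decide (T ≤ z)) := by
    intro c
    have : (fun z : ℝ => decide (T ≤ c + z))
        = (fun z : ℝ => decide (T ≤ z)) ∘ (fun z : ℝ => c + z) := rfl
    rw [this, ← Measure.map_map (measurable_decide_le T) (measurable_const_add c),
        gaussianReal_map_const_add, zero_add]
  rw [hmap m, hmap m']
  refine le_trans (renyi_bool_le hv m m' T hα) ?_
  rw [EReal.coe_le_coe_iff]
  have hΔ : (m - m') ^ 2 ≤ 1 := by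
    have := abs_le.1 hm
    nlinarith [this.1, this.2]
  have h2 : (0:ℝ) < 2 * σ₁ ^ 2 := by positivity
  rw [hvr]
  have hnum : α * (m - m') ^ 2 ≤ α := by nlinarith
  gcongr
end
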